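/- The tent map T(x) = 1 − |2x − 1| is chaotic on [0,1]; that is, there exists δ > 0 such that for every point x ∈ [0,1] and every nonempty open set V ⊆ [0,1] there is a point y ∈ V with limsup_{n→∞} |Tⁿ(x) − Tⁿ(y)| ≥ δ and liminf_{n→∞} |Tⁿ(x) − Tⁿ(y)| = 0. -/

import Mathlib

open Filter

/-- The tent map `T(x) = 1 - |2x - 1|`. -/
noncomputable def tentMap (x : ℝ) : ℝ := 1 - |2 * x - 1|



lemma tentMap_mem (u : ℝ) (hu : u ∈ Set.Icc (0:ℝ) 1) : tentMap u ∈ Set.Icc (0:ℝ) 1 := by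
  obtain ⟨h0, h1⟩ := hu
  unfold tentMap
  constructor
  · have : |2*u - 1| ≤ 1 := by rw [abs_le]; constructor <;> linarith
    linarith
  · have : (0:ℝ) ≤ |2*u-1| := abs_nonneg _
    linarith

lemma tentMap_lip (a b : ℝ) : |tentMap a - tentMap b| ≤ 2 * |a - b| := by
  unfold tentMap
  have h := abs_sub_abs_le_abs_sub (2*b - 1) (2*a - 1)
  have h2 : |2*b - 1 - (2*a - 1)| = 2 * |a - b| := by
    rw [show 2*b - 1 - (2*a-1) = 2*(b-a) by ring, abs_mul, abs_two, abs_sub_comm]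
  calc |1 - |2*a-1| - (1 - |2*b-1|)| = |(|2*b-1|) - (|2*a-1|)| := by ring_nf
    _ ≤ |2*b-1 - (2*a-1)| := abs_abs_sub_abs_le_abs_sub _ _
    _ = 2 * |a - b| := h2

lemma tentMap_symm (u : ℝ) : tentMap (1 - u) = tentMap u := by
  unfold tentMap
  rw [show 2*(1-u) - 1 = -(2*u - 1) by ring, abs_neg]

noncomputable def Wf (u : ℝ) : ℝ := tentMap (Int.fract u)

lemma Wf_eq_tentMap (u : ℝ) (hu : u ∈ Set.Icc (0:ℝ) 1) : Wf u = tentMap u := by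
  obtain ⟨h0, h1⟩ := hu
  rcases eq_or_lt_of_le h1 with h | h
  · subst h
    simp [Wf, Int.fract_one, tentMap]
    norm_num
  · rw [Wf, Int.fract_eq_self.mpr ⟨h0, h⟩]

lemma Wf_two_mul (u : ℝ) : Wf (2 * u) = tentMap (Wf u) := by
  have hf := Int.fract_nonneg u
  have hf1 := Int.fract_lt_one u
  set f := Int.fract u with hfd
  have h2u : Int.fract (2 * u) = Int.fract (2 * f) := by
    have hu2 : 2*u = 2*f + ((2*⌊u⌋ : ℤ) : ℝ) := by
      rw [hfd, Int.fract]; push_cast; ring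
    rw [hu2, Int.fract_add_intCast]
  rcases lt_or_ge f (1/2) with h | h
  · have hfr : Int.fract (2*f) = 2*f := Int.fract_eq_self.mpr ⟨by linarith, by linarith⟩
    have ht : tentMap f = 2*f := by
      unfold tentMap; rw [abs_of_nonpos (by linarith)]; ring
    rw [Wf, h2u, hfr, Wf, ← hfd, ht]
  · have hfr : Int.fract (2*f) = 2*f - 1 := by
      have ha : (0:ℝ) ≤ 2*f - 1 := by linarith
      have hb : 2*f - 1 < 1 := by linarith
      have h1 : Int.fract (2*f - 1) = 2*f - 1 := Int.fract_eq_self.mpr ⟨ha, hb⟩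
      calc Int.fract (2*f) = Int.fract (2*f - 1 + (1:ℤ)) := by norm_num
        _ = Int.fract (2*f - 1) := Int.fract_add_intCast _ _
        _ = 2*f - 1 := h1
    have ht : tentMap f = 2 - 2*f := by
      unfold tentMap; rw [abs_of_nonneg (by linarith)]; ring
    rw [Wf, h2u, hfr, Wf, ← hfd, ht, show (2:ℝ) - 2*f = 1 - (2*f - 1) by ring, tentMap_symm]

lemma iter_eq_Wf (x : ℝ) (hx : x ∈ Set.Icc (0:ℝ) 1) (n : ℕ) :
    tentMap^[n+1] x = Wf (2^n * x) := by
  induction n with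
  | zero => simp [Function.iterate_one, Wf_eq_tentMap x hx]
  | succ n ih =>
    rw [Function.iterate_succ_apply', ih, show (2:ℝ)^(n+1) * x = 2 * (2^n * x) by ring,
      Wf_two_mul]

lemma iter_mem (x : ℝ) (hx : x ∈ Set.Icc (0:ℝ) 1) (n : ℕ) :
    tentMap^[n] x ∈ Set.Icc (0:ℝ) 1 := by
  induction n with
  | zero => simpa
  | succ n ih => rw [Function.iterate_succ_apply']; exact tentMap_mem _ ih

/-- block start positions: p 0 = 0, p (r+1) = p r + r + 4 -/
def pstart : ℕ → ℕ
  | 0 => 0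
  | r + 1 => pstart r + r + 4

lemma pstart_mono : StrictMono pstart := by
  apply strictMono_nat_of_lt_succ
  intro n; simp [pstart]; omega

lemma le_pstart (r : ℕ) : r ≤ pstart r := by
  induction r with
  | zero => simp [pstart]
  | succ n ih => simp [pstart]; omega

/-- the block containing position q -/
def blk (q : ℕ) : ℕ := Nat.findGreatest (fun r => pstart r ≤ q) q

lemma blk_eq {q r : ℕ} (h1 : pstart r ≤ q) (h2 : q < pstart (r+1)) : blk q = r := by
  have hr : r ≤ blk q := Nat.le_findGreatest (le_trans (le_pstart r) h1) h1
  have hlt : blk q < r + 1 := by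
    by_contra hc
    push_neg at hc
    have h3 : pstart (blk q) ≤ q := by
      unfold blk
      exact Nat.findGreatest_spec (P := fun s => pstart s ≤ q) (le_trans (le_pstart r) h1) h1
    have := pstart_mono.monotone hc
    omega
  omega

/-- binary digit i of c (0-indexed: digit of weight 2^{-(i+1)}) -/
noncomputable def dig (c : ℝ) (i : ℕ) : ℝ := ((⌊2^(i+1) * c⌋ : ℤ) : ℝ) - 2 * ((⌊2^i * c⌋ : ℤ) : ℝ)

lemma dig_mem (c : ℝ) (i : ℕ) : dig c i = 0 ∨ dig c i = 1 := by
  have h1 : 2 * ⌊2^i * c⌋ ≤ ⌊2^(i+1) * c⌋ := by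
    apply Int.le_floor.mpr
    push_cast
    rw [pow_succ]
    have := Int.floor_le (2^i * c)
    nlinarith [Int.floor_le (2^i * c)]
  have h2 : ⌊2^(i+1) * c⌋ < 2 * ⌊2^i * c⌋ + 2 := by
    apply Int.floor_lt.mpr
    push_cast
    rw [pow_succ]
    nlinarith [Int.lt_floor_add_one (2^i * c)]
  unfold dig
  have : ⌊2^(i+1) * c⌋ - 2 * ⌊2^i * c⌋ = 0 ∨ ⌊2^(i+1) * c⌋ - 2 * ⌊2^i * c⌋ = 1 := by omega
  rcases this with h | h
  · left
    have h' : ((⌊2^(i+1) * c⌋ - 2 * ⌊2^i * c⌋ : ℤ) : ℝ) = 0 := by rw [h]; norm_num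
    push_cast at h'
    linarith
  · right
    have h' : ((⌊2^(i+1) * c⌋ - 2 * ⌊2^i * c⌋ : ℤ) : ℝ) = 1 := by rw [h]; norm_num
    push_cast at h'
    linarith

lemma dig_sum (c : ℝ) (hc : c ∈ Set.Ico (0:ℝ) 1) (k : ℕ) :
    ∑ i ∈ Finset.range k, dig c i * (1/2)^(i+1) = ((⌊2^k * c⌋ : ℤ) : ℝ) / 2^k := by
  have key : ∀ i, dig c i * (1/2)^(i+1)
      = ((⌊2^(i+1) * c⌋ : ℤ) : ℝ) / 2^(i+1) - ((⌊2^i * c⌋ : ℤ) : ℝ) / 2^i := by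
    intro i
    unfold dig
    have h2 : (2:ℝ)^(i+1) = 2 * 2^i := by rw [pow_succ]; ring
    rw [div_pow, one_pow, h2]
    field_simp
  calc ∑ i ∈ Finset.range k, dig c i * (1/2)^(i+1)
      = ∑ i ∈ Finset.range k, (((⌊2^(i+1) * c⌋ : ℤ) : ℝ) / 2^(i+1) - ((⌊2^i * c⌋ : ℤ) : ℝ) / 2^i) := by
        exact Finset.sum_congr rfl (fun i _ => key i)
    _ = ((⌊2^k * c⌋ : ℤ) : ℝ) / 2^k - ((⌊2^0 * c⌋ : ℤ) : ℝ) / 2^0 :=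
        Finset.sum_range_sub (fun i => ((⌊2^i * c⌋ : ℤ) : ℝ) / 2^i) k
    _ = ((⌊2^k * c⌋ : ℤ) : ℝ) / 2^k := by
        have h0 : ⌊(2:ℝ)^0 * c⌋ = 0 := by
          rw [pow_zero, one_mul]; exact Int.floor_eq_zero_iff.mpr hc
        rw [h0]; norm_num

lemma dig_sum_le (c : ℝ) (hc : c ∈ Set.Ico (0:ℝ) 1) (k : ℕ) :
    ∑ i ∈ Finset.range k, dig c i * (1/2)^(i+1) ≤ c ∧
    c ≤ ∑ i ∈ Finset.range k, dig c i * (1/2)^(i+1) + (1/2)^k := by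
  rw [dig_sum c hc k]
  have hp : (0:ℝ) < 2^k := by positivity
  have h1 := Int.floor_le (2^k * c)
  have h2 := Int.lt_floor_add_one (2^k * c)
  constructor
  · rw [div_le_iff₀ hp]; linarith
  · rw [show ((1:ℝ)/2)^k = 1/2^k by rw [div_pow]; norm_num]
    rw [← add_div, le_div_iff₀ hp]
    linarith

/-- the digit sequence of the point y we construct, for given x and m -/
noncomputable def tdig (x : ℝ) (m : ℕ) (q : ℕ) : ℝ :=
  let r := blk q
  let o := q - pstart r
  if o ≤ r then dig (Int.fract (2^(pstart r + m) * x)) o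
  else if o = r + 1 then
    (if tentMap (Int.fract (2^(pstart r + r + 1 + m) * x)) ≤ 1/2 then 1 else 0)
  else 0

lemma tdig_mem (x : ℝ) (m q : ℕ) : tdig x m q = 0 ∨ tdig x m q = 1 := by
  unfold tdig
  simp only
  split
  · exact dig_mem _ _
  · split
    · split
      · right; rfl
      · left; rfl
    · left; rfl

lemma tdig_nonneg (x : ℝ) (m q : ℕ) : 0 ≤ tdig x m q := by
  rcases tdig_mem x m q with h | h <;> rw [h] <;> norm_num

lemma tdig_le_one (x : ℝ) (m q : ℕ) : tdig x m q ≤ 1 := by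
  rcases tdig_mem x m q with h | h <;> rw [h] <;> norm_num

/-- digits in the "near" part of block r -/
lemma tdig_near (x : ℝ) (m r i : ℕ) (hi : i ≤ r) :
    tdig x m (pstart r + i) = dig (Int.fract (2^(pstart r + m) * x)) i := by
  have hb : blk (pstart r + i) = r := blk_eq (Nat.le_add_right _ _) (by simp only [pstart]; omega)
  unfold tdig
  simp only [hb]
  rw [Nat.add_sub_cancel_left]
  simp [hi]

/-- digits in the "far" part of block r -/
lemma tdig_far0 (x : ℝ) (m r : ℕ) :
    tdig x m (pstart r + r + 1) =
      (if tentMap (Int.fract (2^(pstart r + r + 1 + m) * x)) ≤ 1/2 then (1:ℝ) else 0) := by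
  have hb : blk (pstart r + r + 1) = r := blk_eq (by omega) (by simp only [pstart]; omega)
  unfold tdig
  simp only [hb]
  have ho : pstart r + r + 1 - pstart r = r + 1 := by omega
  rw [ho, if_neg (by omega), if_pos rfl]

lemma tdig_far1 (x : ℝ) (m r j : ℕ) (hj2 : 2 ≤ j) (hj3 : j ≤ 3) :
    tdig x m (pstart r + r + j) = 0 := by
  have hb : blk (pstart r + r + j) = r := blk_eq (by omega) (by simp only [pstart]; omega)
  unfold tdig
  simp only [hb]
  have ho : pstart r + r + j - pstart r = r + j := by omega
  rw [ho, if_neg (by omega), if_neg (by omega)]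

/-- the tail sums -/
noncomputable def ttail (x : ℝ) (m : ℕ) (j : ℕ) : ℝ := ∑' i : ℕ, tdig x m (j + i) * (1/2)^(i+1)

lemma geom_summable : Summable (fun i : ℕ => ((1:ℝ)/2)^(i+1)) := by
  have h : Summable (fun i : ℕ => ((1:ℝ)/2)^i) :=
    summable_geometric_of_lt_one (by norm_num) (by norm_num)
  exact (h.mul_right (1/2)).congr (fun i => (pow_succ _ _).symm)

lemma geom_tsum : ∑' i : ℕ, ((1:ℝ)/2)^(i+1) = 1 := by
  have h : ∑' i : ℕ, ((1:ℝ)/2)^i = 2 := by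
    rw [tsum_geometric_of_lt_one (by norm_num) (by norm_num)]
    norm_num
  calc ∑' i : ℕ, ((1:ℝ)/2)^(i+1) = ∑' i : ℕ, (1/2) * ((1:ℝ)/2)^i := by
        congr 1; funext i; rw [pow_succ]; ring
    _ = (1/2) * ∑' i : ℕ, ((1:ℝ)/2)^i := tsum_mul_left
    _ = 1 := by rw [h]; norm_num

lemma ttail_summable (x : ℝ) (m j : ℕ) :
    Summable (fun i : ℕ => tdig x m (j + i) * (1/2)^(i+1)) := by
  have h1 : ∀ i : ℕ, 0 ≤ tdig x m (j + i) * (1/2)^(i+1) := by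
    intro i
    exact mul_nonneg (tdig_nonneg _ _ _) (by positivity)
  have h2 : ∀ i : ℕ, tdig x m (j + i) * (1/2)^(i+1) ≤ ((1:ℝ)/2)^(i+1) := by
    intro i
    have h := tdig_le_one x m (j + i)
    have hp : (0:ℝ) < (1/2:ℝ)^(i+1) := by positivity
    nlinarith
  exact Summable.of_nonneg_of_le h1 h2 geom_summable

lemma ttail_nonneg (x : ℝ) (m j : ℕ) : 0 ≤ ttail x m j :=
  tsum_nonneg (fun i => mul_nonneg (tdig_nonneg _ _ _) (by positivity))

lemma ttail_le_one (x : ℝ) (m j : ℕ) : ttail x m j ≤ 1 := by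
  rw [← geom_tsum]
  apply Summable.tsum_le_tsum _ (ttail_summable x m j) geom_summable
  intro i
  have h := tdig_le_one x m (j + i)
  have hp : (0:ℝ) < (1/2:ℝ)^(i+1) := by positivity
  nlinarith

lemma ttail_rec (x : ℝ) (m j : ℕ) :
    ttail x m j = tdig x m j * (1/2) + (1/2) * ttail x m (j+1) := by
  rw [ttail, Summable.tsum_eq_zero_add (ttail_summable x m j)]
  congr 1
  · norm_num
  · rw [ttail, ← tsum_mul_left]
    congr 1; funext i
    rw [show j + (i+1) = (j+1) + i by omega, pow_succ]
    ring

/-- finite truncation bounds for the tail -/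
lemma ttail_bounds (x : ℝ) (m : ℕ) (k : ℕ) : ∀ j : ℕ,
    ∑ i ∈ Finset.range k, tdig x m (j + i) * (1/2)^(i+1) ≤ ttail x m j ∧
    ttail x m j ≤ ∑ i ∈ Finset.range k, tdig x m (j + i) * (1/2)^(i+1) + (1/2)^k := by
  induction k with
  | zero =>
    intro j
    simp [ttail_nonneg x m j, ttail_le_one x m j]
  | succ k ih =>
    intro j
    obtain ⟨ihl, ihr⟩ := ih (j+1)
    have hrec := ttail_rec x m j
    have hsum : ∑ i ∈ Finset.range (k+1), tdig x m (j + i) * (1/2)^(i+1)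
        = tdig x m j * (1/2) + (1/2) * ∑ i ∈ Finset.range k, tdig x m ((j+1) + i) * (1/2)^(i+1) := by
      rw [Finset.sum_range_succ' (fun i => tdig x m (j + i) * (1/2)^(i+1)) k]
      rw [Finset.mul_sum, add_comm]
      congr 1
      · norm_num
      · apply Finset.sum_congr rfl
        intro i _
        rw [show j + (i+1) = (j+1) + i by omega, pow_succ]
        ring
    constructor
    · rw [hsum, hrec]; linarith
    · rw [hsum, hrec, show ((1:ℝ)/2)^(k+1) = (1/2) * (1/2)^k by rw [pow_succ]; ring]
      linarith

lemma finite_geom_sum (k : ℕ) : ∑ i ∈ Finset.range k, ((1:ℝ)/2)^(i+1) = 1 - (1/2)^k := by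
  induction k with
  | zero => simp
  | succ k ih =>
    rw [Finset.sum_range_succ, ih, pow_succ]
    ring

/-- every tail contains a zero digit, hence is < 1 -/
lemma ttail_lt_one (x : ℝ) (m j : ℕ) : ttail x m j < 1 := by
  set q0 := pstart j + j + 2 with hq0
  have hq0j : j ≤ q0 := by have := le_pstart j; omega
  set i0 := q0 - j with hi0
  have hdig0 : tdig x m (j + i0) = 0 := by
    rw [show j + i0 = pstart j + j + 2 by omega]
    exact tdig_far1 x m j 2 le_rfl (by norm_num)
  set k := i0 + 1 with hk
  have hb := (ttail_bounds x m k j).2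
  have hsumle : ∑ i ∈ Finset.range k, tdig x m (j + i) * (1/2)^(i+1)
      ≤ (∑ i ∈ Finset.range k, ((1:ℝ)/2)^(i+1)) - (1/2)^(i0+1) := by
    have : ∀ i ∈ Finset.range k, tdig x m (j + i) * (1/2)^(i+1)
        ≤ ((1:ℝ)/2)^(i+1) - (if i = i0 then (1/2)^(i0+1) else 0) := by
      intro i _
      by_cases h : i = i0
      · subst h
        rw [hdig0, if_pos rfl]
        norm_num
      · rw [if_neg h]
        have h1 := tdig_le_one x m (j + i)
        have hp : (0:ℝ) < (1/2:ℝ)^(i+1) := by positivity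
        nlinarith
    calc ∑ i ∈ Finset.range k, tdig x m (j + i) * (1/2)^(i+1)
        ≤ ∑ i ∈ Finset.range k, (((1:ℝ)/2)^(i+1) - (if i = i0 then (1/2)^(i0+1) else 0)) :=
          Finset.sum_le_sum this
      _ = (∑ i ∈ Finset.range k, ((1:ℝ)/2)^(i+1))
          - ∑ i ∈ Finset.range k, (if i = i0 then ((1:ℝ)/2)^(i0+1) else 0) := by
          rw [Finset.sum_sub_distrib]
      _ = (∑ i ∈ Finset.range k, ((1:ℝ)/2)^(i+1)) - (1/2)^(i0+1) := by
          rw [Finset.sum_ite_eq' (Finset.range k) i0 (fun _ => ((1:ℝ)/2)^(i0+1))]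
          rw [if_pos (Finset.mem_range.mpr (by omega))]
    
  rw [finite_geom_sum] at hsumle
  have hp : (0:ℝ) < (1/2:ℝ)^(i0+1) := by positivity
  have hk' : ((1:ℝ)/2)^k = (1/2)^(i0+1) := by rw [hk]
  linarith [hb, hsumle]

/-- 2^j * ttail 0 is ttail j plus an integer -/
lemma ttail_shift (x : ℝ) (m : ℕ) : ∀ j : ℕ, ∃ z : ℤ, 2^j * ttail x m 0 = z + ttail x m j := by
  intro j
  induction j with
  | zero => exact ⟨0, by norm_num⟩
  | succ j ih =>
    obtain ⟨z, hz⟩ := ih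
    obtain ⟨b, hb⟩ : ∃ b : ℤ, tdig x m j = b := by
      rcases tdig_mem x m j with h | h
      · exact ⟨0, by rw [h]; norm_num⟩
      · exact ⟨1, by rw [h]; norm_num⟩
    refine ⟨2*z + b, ?_⟩
    have hrec := ttail_rec x m j
    push_cast
    calc (2:ℝ)^(j+1) * ttail x m 0 = 2 * (2^j * ttail x m 0) := by rw [pow_succ]; ring
      _ = 2 * (z + ttail x m j) := by rw [hz]
      _ = 2*z + 2 * (tdig x m j * (1/2) + (1/2) * ttail x m (j+1)) := by rw [← hrec]; ring
      _ = 2*(z:ℝ) + b + ttail x m (j+1) := by rw [hb]; ring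

lemma fract_ttail (x : ℝ) (m j : ℕ) : Int.fract (2^j * ttail x m 0) = ttail x m j := by
  obtain ⟨z, hz⟩ := ttail_shift x m j
  rw [hz, add_comm, Int.fract_add_intCast]
  exact Int.fract_eq_self.mpr ⟨ttail_nonneg x m j, ttail_lt_one x m j⟩

lemma near_estimate (x : ℝ) (m r : ℕ) :
    |ttail x m (pstart r) - Int.fract (2^(pstart r + m) * x)| ≤ (1/2)^(r+1) := by
  have hc : Int.fract (2^(pstart r + m) * x) ∈ Set.Ico (0:ℝ) 1 :=
    ⟨Int.fract_nonneg _, Int.fract_lt_one _⟩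
  obtain ⟨hb1, hb2⟩ := ttail_bounds x m (r+1) (pstart r)
  have hsum : ∑ i ∈ Finset.range (r+1), tdig x m (pstart r + i) * (1/2)^(i+1)
      = ∑ i ∈ Finset.range (r+1), dig (Int.fract (2^(pstart r + m) * x)) i * (1/2)^(i+1) := by
    apply Finset.sum_congr rfl
    intro i hi
    rw [tdig_near x m r i (Nat.lt_succ_iff.mp (Finset.mem_range.mp hi))]
  rw [hsum] at hb1 hb2
  obtain ⟨hc1, hc2⟩ := dig_sum_le (Int.fract (2^(pstart r + m) * x)) hc (r+1)
  rw [abs_le]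
  constructor <;> linarith

lemma far_estimate (x : ℝ) (m r : ℕ) :
    1/4 ≤ |tentMap (Int.fract (2^(pstart r + r + 1 + m) * x))
            - tentMap (ttail x m (pstart r + r + 1))| := by
  have hfr : Int.fract (2^(pstart r + r + 1 + m) * x) ∈ Set.Icc (0:ℝ) 1 :=
    ⟨Int.fract_nonneg _, (Int.fract_lt_one _).le⟩
  have hw01 := tentMap_mem _ hfr
  obtain ⟨hw0, hw1⟩ := hw01
  obtain ⟨hb1, hb2⟩ := ttail_bounds x m 3 (pstart r + r + 1)
  have hs : ∑ i ∈ Finset.range 3, tdig x m ((pstart r + r + 1) + i) * (1/2)^(i+1)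
      = tdig x m (pstart r + r + 1) * (1/2) := by
    rw [Finset.sum_range_succ, Finset.sum_range_succ, Finset.sum_range_one]
    rw [show pstart r + r + 1 + 1 = pstart r + r + 2 by ring]
    rw [tdig_far1 x m r 2 le_rfl (by norm_num)]
    rw [show pstart r + r + 1 + 2 = pstart r + r + 3 by ring]
    rw [tdig_far1 x m r 3 (by norm_num) le_rfl]
    norm_num
  rw [hs] at hb1 hb2
  have hd := tdig_far0 x m r
  have ht0 := ttail_nonneg x m (pstart r + r + 1)
  by_cases hcase : tentMap (Int.fract (2^(pstart r + r + 1 + m) * x)) ≤ 1/2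
  · rw [hd, if_pos hcase] at hb1 hb2
    have h1 : (1:ℝ)/2 ≤ ttail x m (pstart r + r + 1) := by linarith
    have h2 : ttail x m (pstart r + r + 1) ≤ 5/8 := by
      have : ((1:ℝ)/2)^3 = 1/8 := by norm_num
      linarith
    have htt : tentMap (ttail x m (pstart r + r + 1))
        = 2 - 2 * ttail x m (pstart r + r + 1) := by
      unfold tentMap
      rw [abs_of_nonneg (by linarith)]
      ring
    rw [htt]
    refine le_trans (by linarith) (neg_le_abs _)
  · push_neg at hcase
    rw [hd, if_neg (by push_neg; exact hcase)] at hb1 hb2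
    have h2 : ttail x m (pstart r + r + 1) ≤ 1/8 := by
      have : ((1:ℝ)/2)^3 = 1/8 := by norm_num
      linarith
    have htt : tentMap (ttail x m (pstart r + r + 1))
        = 2 * ttail x m (pstart r + r + 1) := by
      unfold tentMap
      rw [abs_of_nonpos (by linarith)]
      ring
    rw [htt]
    refine le_trans (by linarith) (le_abs_self _)

/-- The tent map is chaotic on `[0,1]`: there exists `δ > 0` such that for every
`x ∈ [0,1]` and every nonempty (relatively) open subset `V` of `[0,1]` there is
`y ∈ V` with `limsup |Tⁿx - Tⁿy| ≥ δ` and `liminf |Tⁿx - Tⁿy| = 0`. -/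
theorem tent_chaotic :
    ∃ δ : ℝ, 0 < δ ∧
      ∀ x ∈ Set.Icc (0 : ℝ) 1, ∀ V : Set ℝ, V ⊆ Set.Icc (0 : ℝ) 1 →
        (∃ U : Set ℝ, IsOpen U ∧ V = Set.Icc (0 : ℝ) 1 ∩ U) → V.Nonempty →
        ∃ y ∈ V,
          δ ≤ limsup (fun n => |tentMap^[n] x - tentMap^[n] y|) atTop ∧
          liminf (fun n => |tentMap^[n] x - tentMap^[n] y|) atTop = 0 := by
  refine ⟨1/4, by norm_num, ?_⟩
  intro x hx V hVsub hVopen hVne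
  obtain ⟨U, hU, hVU⟩ := hVopen
  obtain ⟨v, hv⟩ := hVne
  have hvIcc : v ∈ Set.Icc (0:ℝ) 1 := hVsub hv
  have hvU : v ∈ U := by rw [hVU] at hv; exact hv.2
  obtain ⟨ε, hε, hball⟩ := Metric.isOpen_iff.mp hU v hvU
  obtain ⟨m, hm⟩ := exists_pow_lt_of_lt_one hε (show (1:ℝ)/2 < 1 by norm_num)
  -- the dyadic interval [k/2^m, (k+1)/2^m] around v
  set k : ℕ := min (⌊2^m * v⌋.toNat) (2^m - 1) with hk
  have h2m : (1:ℕ) ≤ 2^m := Nat.one_le_two_pow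
  have h2mR : (0:ℝ) < 2^m := by positivity
  have hfl : (0:ℤ) ≤ ⌊2^m * v⌋ := Int.floor_nonneg.mpr (by nlinarith [hvIcc.1])
  have hkfl : (k:ℤ) ≤ ⌊2^m * v⌋ := by
    have : k ≤ ⌊2^m * v⌋.toNat := min_le_left _ _
    omega
  have hk1 : (k:ℝ) ≤ 2^m * v := le_trans (by exact_mod_cast hkfl) (Int.floor_le _)
  have hk3 : k + 1 ≤ 2^m := by
    have : k ≤ 2^m - 1 := min_le_right _ _
    omega
  have hk2 : 2^m * v ≤ (k:ℝ) + 1 := by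
    rcases le_or_gt (⌊2^m * v⌋.toNat) (2^m - 1) with h | h
    · have hkeq : k = ⌊2^m * v⌋.toNat := min_eq_left h
      have : 2^m * v < (⌊2^m * v⌋ : ℝ) + 1 := Int.lt_floor_add_one _
      have hcast : ((⌊2^m * v⌋.toNat : ℕ) : ℝ) = ((⌊2^m * v⌋ : ℤ) : ℝ) := by
        exact_mod_cast congrArg (fun z : ℤ => (z : ℝ)) (Int.toNat_of_nonneg hfl)
      rw [hkeq, hcast]
      linarith
    · have hkeq : k = 2^m - 1 := min_eq_right (le_of_lt h)
      have : ((k:ℝ) + 1) = ((2^m : ℕ) : ℝ) := by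
        rw [hkeq]
        push_cast [Nat.cast_sub h2m]
        ring
      rw [this]
      push_cast
      nlinarith [hvIcc.2]
  set t : ℝ := ttail x m 0 with htdef
  have ht0 : 0 ≤ t := ttail_nonneg x m 0
  have ht1 : t ≤ 1 := ttail_le_one x m 0
  set y : ℝ := ((k:ℝ) + t)/2^m with hydef
  have hyIcc : y ∈ Set.Icc ((k:ℝ)/2^m) (((k:ℝ)+1)/2^m) := by
    constructor
    · rw [hydef, div_le_div_iff_of_pos_right h2mR]
      linarith
    · rw [hydef, div_le_div_iff_of_pos_right h2mR]
      linarith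
  have hIccSub : Set.Icc ((k:ℝ)/2^m) (((k:ℝ)+1)/2^m) ⊆ V := by
    rw [hVU]
    intro z hz
    obtain ⟨hz1, hz2⟩ := hz
    have hk3R : ((k:ℝ) + 1) ≤ 2^m := by exact_mod_cast hk3
    constructor
    · constructor
      · have : (0:ℝ) ≤ (k:ℝ)/2^m := by positivity
        linarith
      · have hk3R : ((k:ℝ) + 1) ≤ 2^m := by exact_mod_cast hk3
        calc z ≤ ((k:ℝ)+1)/2^m := hz2
          _ ≤ 2^m/2^m := by rw [div_le_div_iff_of_pos_right h2mR]; exact hk3R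
          _ = 1 := div_self (ne_of_gt h2mR)
    · apply hball
      rw [Metric.mem_ball, Real.dist_eq]
      have hvl : (k:ℝ)/2^m ≤ v := by rw [div_le_iff₀ h2mR]; nlinarith
      have hvr : v ≤ ((k:ℝ)+1)/2^m := by rw [le_div_iff₀ h2mR]; nlinarith
      have hlen : ((k:ℝ)+1)/2^m - (k:ℝ)/2^m = (1/2)^m := by
        rw [div_pow, one_pow]
        field_simp
        ring
      have : |z - v| ≤ (1/2)^m := by
        rw [abs_le]
        constructor <;> linarith
      linarith
  have hyV : y ∈ V := hIccSub hyIcc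
  have hy01 : y ∈ Set.Icc (0:ℝ) 1 := hVsub hyV
  -- the key formula
  have key : ∀ j : ℕ, tentMap^[j + m + 1] x - tentMap^[j + m + 1] y
      = tentMap (Int.fract (2^(j+m) * x)) - tentMap (ttail x m j) := by
    intro j
    have hxit : tentMap^[(j+m)+1] x = Wf (2^(j+m) * x) := iter_eq_Wf x hx (j+m)
    have hyit : tentMap^[(j+m)+1] y = Wf (2^(j+m) * y) := iter_eq_Wf y hy01 (j+m)
    have harg : 2^(j+m) * y = 2^j * t + ((k * 2^j : ℕ) : ℝ) := by
      rw [hydef, pow_add]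
      push_cast
      field_simp
      ring
    have hfr : Int.fract (2^(j+m) * y) = ttail x m j := by
      rw [harg]
      rw [show ((k * 2^j : ℕ) : ℝ) = (((k * 2^j : ℕ) : ℤ) : ℝ) by push_cast; ring]
      rw [Int.fract_add_intCast]
      exact fract_ttail x m j
    rw [hxit, hyit, Wf, Wf, hfr]
  -- boundedness
  have bound : ∀ n, |tentMap^[n] x - tentMap^[n] y| ≤ 1 := by
    intro n
    obtain ⟨ha1, ha2⟩ := iter_mem x hx n
    obtain ⟨hb1, hb2⟩ := iter_mem y hy01 n
    rw [abs_le]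
    constructor <;> linarith
  have hbdd : IsBoundedUnder (· ≤ ·) atTop (fun n => |tentMap^[n] x - tentMap^[n] y|) :=
    ⟨1, Filter.eventually_map.mpr (Filter.Eventually.of_forall bound)⟩
  have hbdd2 : IsBoundedUnder (· ≥ ·) atTop (fun n => |tentMap^[n] x - tentMap^[n] y|) :=
    ⟨0, Filter.eventually_map.mpr (Filter.Eventually.of_forall (fun n => abs_nonneg _))⟩
  refine ⟨y, hyV, ?_, ?_⟩
  · -- limsup ≥ 1/4
    apply le_limsup_of_frequently_le ?_ hbdd
    rw [Filter.frequently_atTop]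
    intro N
    refine ⟨(pstart N + N + 1) + m + 1, ?_, ?_⟩
    · have := le_pstart N
      omega
    · have hfe := far_estimate x m N
      have hkey := key (pstart N + N + 1)
      show (1:ℝ)/4 ≤ |tentMap^[pstart N + N + 1 + m + 1] x - tentMap^[pstart N + N + 1 + m + 1] y|
      rw [hkey]
      exact hfe
  · -- liminf = 0
    have hge : (0:ℝ) ≤ liminf (fun n => |tentMap^[n] x - tentMap^[n] y|) atTop := by
      apply le_liminf_of_le (hbdd.isCoboundedUnder_ge)
      exact Filter.Eventually.of_forall (fun n => abs_nonneg _)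
    have hle : liminf (fun n => |tentMap^[n] x - tentMap^[n] y|) atTop ≤ 0 := by
      apply le_of_forall_pos_le_add
      intro ε hε'
      rw [zero_add]
      apply liminf_le_of_frequently_le ?_ hbdd2
      rw [Filter.frequently_atTop]
      intro N
      obtain ⟨r0, hr0⟩ := exists_pow_lt_of_lt_one hε' (show (1:ℝ)/2 < 1 by norm_num)
      set r := max N r0 with hr
      refine ⟨pstart r + m + 1, ?_, ?_⟩
      · have := le_pstart r
        omega
      · show |tentMap^[pstart r + m + 1] x - tentMap^[pstart r + m + 1] y| ≤ ε
        rw [key (pstart r)]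
        have hne := near_estimate x m r
        have hlip := tentMap_lip (Int.fract (2^(pstart r + m) * x)) (ttail x m (pstart r))
        have habs : |Int.fract (2^(pstart r + m) * x) - ttail x m (pstart r)|
            = |ttail x m (pstart r) - Int.fract (2^(pstart r + m) * x)| := abs_sub_comm _ _
        have hpow : 2 * ((1:ℝ)/2)^(r+1) = (1/2)^r := by
          rw [pow_succ]
          ring
        have hmono : ((1:ℝ)/2)^r ≤ (1/2)^r0 :=
          pow_le_pow_of_le_one (by norm_num) (by norm_num) (le_max_right N r0)
        calc |tentMap (Int.fract (2^(pstart r + m) * x)) - tentMap (ttail x m (pstart r))|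
            ≤ 2 * |Int.fract (2^(pstart r + m) * x) - ttail x m (pstart r)| := hlip
          _ = 2 * |ttail x m (pstart r) - Int.fract (2^(pstart r + m) * x)| := by rw [habs]
          _ ≤ 2 * (1/2)^(r+1) := by linarith
          _ = (1/2)^r := hpow
          _ ≤ (1/2)^r0 := hmono
          _ ≤ ε := le_of_lt hr0
    linarith
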